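/- If prices are multiplicative, p_{ij} = p_i q_j with p_i, q_j > 0, then any staircase S ⊆ [m]×[n] can be captured exactly: there exist nonnegative multipliers r, c such that r_i c_j ≥ p_{ij} if and only if (i,j) ∈ S. -/
import Mathlib


/-- With multiplicative prices p_{ij} = p_i q_j (p_i, q_j > 0), every staircase
S (columns totally ordered by inclusion of their row sets) can be captured
exactly by some nonnegative multipliers. -/
theorem stmt_9 (m n : ℕ) (p : Fin m → ℝ) (q : Fin n → ℝ)
    (hp : ∀ i, 0 < p i) (hq : ∀ j, 0 < q j)
    (S : Set (Fin m × Fin n))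
    (hstair : ∀ j₁ j₂ : Fin n,
      {i | (i, j₁) ∈ S} ⊆ {i | (i, j₂) ∈ S} ∨ {i | (i, j₂) ∈ S} ⊆ {i | (i, j₁) ∈ S}) :
    ∃ (r : Fin m → ℝ) (c : Fin n → ℝ),
      (∀ i, 0 ≤ r i) ∧ (∀ j, 0 ≤ c j) ∧
      ∀ i j, (i, j) ∈ S ↔ r i * c j ≥ p i * q j := by
  classical
  set N : Fin n → ℕ := fun j => (Finset.univ.filter (fun i => (i, j) ∈ S)).card with hN
  have key : ∀ j₁ j₂ : Fin n, N j₁ ≤ N j₂ → ∀ i, (i, j₁) ∈ S → (i, j₂) ∈ S := by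
    intro j₁ j₂ hle i hi
    rcases hstair j₁ j₂ with h | h
    · exact h hi
    · have hsub : (Finset.univ.filter (fun i => (i, j₂) ∈ S)) ⊆
          (Finset.univ.filter (fun i => (i, j₁) ∈ S)) := by
        intro x hx
        simp only [Finset.mem_filter, Finset.mem_univ, true_and] at *
        exact h hx
      have heq := Finset.eq_of_subset_of_card_le hsub hle
      have : i ∈ Finset.univ.filter (fun i => (i, j₂) ∈ S) := by
        rw [heq]
        simp only [Finset.mem_filter, Finset.mem_univ, true_and]
        exact hi
      simpa using this
  set a : Fin m → ℕ := fun i => sInf {k | ∃ j, (i, j) ∈ S ∧ N j = k} with ha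
  set s : Fin m → ℝ := fun i =>
    if ∃ j, (i, j) ∈ S then (2 : ℝ) ^ (-(a i : ℤ)) else 0 with hs
  have hsnn : ∀ i, 0 ≤ s i := by
    intro i
    rw [hs]
    dsimp only
    split
    · positivity
    · exact le_refl 0
  refine ⟨fun i => p i * s i, fun j => q j * (2 : ℝ) ^ (N j : ℤ), ?_, ?_, ?_⟩
  · intro i
    exact mul_nonneg (hp i).le (hsnn i)
  · intro j
    exact mul_nonneg (hq j).le (zpow_nonneg (by norm_num) _)
  · intro i j
    have hpq : 0 < p i * q j := mul_pos (hp i) (hq j)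
    have hrewrite : p i * s i * (q j * (2 : ℝ) ^ (N j : ℤ)) =
        p i * q j * (s i * (2 : ℝ) ^ (N j : ℤ)) := by ring
    rw [ge_iff_le, hrewrite, le_mul_iff_one_le_right hpq]
    by_cases h : ∃ j', (i, j') ∈ S
    · have hsi : s i = (2 : ℝ) ^ (-(a i : ℤ)) := by rw [hs]; simp [h]
      rw [hsi, ← zpow_add₀ (two_ne_zero)]
      have h2 : (1 : ℝ) ≤ (2 : ℝ) ^ (-(a i : ℤ) + (N j : ℤ)) ↔ (0:ℤ) ≤ -(a i : ℤ) + (N j : ℤ) := by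
        rw [show (1:ℝ) = (2:ℝ) ^ (0:ℤ) by norm_num,
          zpow_le_zpow_iff_right₀ (by norm_num : (1:ℝ) < 2)]
      rw [h2]
      have haeq : a i = sInf {k | ∃ j, (i, j) ∈ S ∧ N j = k} := rfl
      constructor
      · intro hi
        have : a i ≤ N j := Nat.sInf_le ⟨j, hi, rfl⟩
        omega
      · intro hle
        obtain ⟨j₀, hj₀, hNj₀⟩ := Nat.sInf_mem (⟨N h.choose, h.choose, h.choose_spec, rfl⟩ :
          {k | ∃ j, (i, j) ∈ S ∧ N j = k}.Nonempty)
        exact key j₀ j (by omega) i hj₀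
    · have hsi : s i = 0 := by rw [hs]; simp [h]
      rw [hsi]
      simp only [zero_mul]
      constructor
      · intro hi; exact absurd ⟨j, hi⟩ h
      · intro h1; linarith
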